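/- Let 𝕜 be ℝ or ℂ. Let U ⊆ ℝ^p be open, let f₁, …, f_n : U → ℝ be C^∞ (infinitely differentiable) functions, and set Y := {x ∈ U : f₁(x) = … = f_n(x) = 0}. Assume that for every x ∈ Y the derivatives Df₁(x), …, Df_n(x) ∈ (ℝ^p)^* are linearly independent. Then every point of Y has an open neighbourhood V ⊆ U with the following two properties: (1) for every C^∞ function g : V → 𝕜 with g = 0 on V ∩ Y there exist C^∞ functions g₁, …, g_n : V → 𝕜 such that g = Σ_{j=1}^n f_j g_j on V; (2) there exist C^∞ functions f_{n+1}, …, f_p : V → ℝ such that the map f = (f₁, …, f_p) : V → ℝ^p is a C^∞ diffeomorphism from V onto an open subset of ℝ^p. -/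

import Mathlib

set_option synthInstance.maxHeartbeats 1000000
set_option maxHeartbeats 1000000
open Set MeasureTheory intervalIntegral

-- coordinate helper
theorem coord_sum {p n : ℕ} (hnp : n ≤ p) (a : Fin n → ℝ) (i : Fin p) :
    (∑ j, Pi.single (M := fun _ : Fin p => ℝ) (Fin.castLE hnp j) (a j)) i
      = if h : (i : ℕ) < n then a ⟨i, h⟩ else 0 := by
  rw [Finset.sum_apply]
  by_cases h : (i : ℕ) < n
  · rw [dif_pos h]
    rw [Finset.sum_eq_single ⟨i, h⟩]
    · simp [Fin.castLE]
    · intro j _ hj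
      apply Pi.single_eq_of_ne
      intro hc
      exact hj (by ext; exact (congrArg Fin.val hc).symm)
    · simp
  · rw [dif_neg h]
    apply Finset.sum_eq_zero
    intro j _
    apply Pi.single_eq_of_ne
    intro hc
    have : (i : ℕ) = (j : ℕ) := congrArg Fin.val hc
    omega
open Set MeasureTheory intervalIntegral Interval

universe u
variable {E : Type} [NormedAddCommGroup E] [NormedSpace ℝ E] [ProperSpace E]

theorem param_int (m : ℕ) : ∀ {F : Type u} [NormedAddCommGroup F] [NormedSpace ℝ F]
    [CompleteSpace F] (K : ℝ × E → F) (Ω : Set (ℝ × E)) (W : Set E),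
    IsOpen Ω → IsOpen W → (∀ t ∈ Set.Icc (0:ℝ) 1, ∀ z ∈ W, (t, z) ∈ Ω) →
    ContDiffOn ℝ m K Ω →
    ContDiffOn ℝ m (fun z => ∫ t in (0:ℝ)..1, K (t, z)) W := by
  have uIocIcc : Ι (0:ℝ) 1 ⊆ Icc 0 1 := by
    rw [Set.uIoc_of_le zero_le_one]; exact Set.Ioc_subset_Icc_self
  induction m with
  | zero =>
    intro F _ _ _ K Ω W hΩ hW hsub hK
    rw [CharP.cast_eq_zero, contDiffOn_zero] at hK ⊢
    intro z₀ hz₀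
    obtain ⟨δ, δpos, hball⟩ : ∃ δ > 0, Metric.closedBall z₀ δ ⊆ W :=
      (Metric.nhds_basis_closedBall.mem_iff).1 (hW.mem_nhds hz₀)
    obtain ⟨M, hM⟩ := (isCompact_Icc.prod (isCompact_closedBall z₀ δ)).exists_bound_of_continuousOn
      (hK.mono (fun q hq => hsub q.1 hq.1 q.2 (hball hq.2)))
    have hmeas : ∀ z ∈ W, AEStronglyMeasurable (fun t => K (t, z))
        (volume.restrict (Ι (0:ℝ) 1)) := by
      intro z hz
      refine ContinuousOn.aestronglyMeasurable (fun t ht => ?_) measurableSet_uIoc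
      exact (ContinuousAt.comp (f := fun t : ℝ => ((t, z) : ℝ × E))
        (hK.continuousAt (hΩ.mem_nhds (hsub t (uIocIcc ht) z hz)))
        (continuous_id.prodMk continuous_const).continuousAt).continuousWithinAt
    refine intervalIntegral.continuousWithinAt_of_dominated_interval
      (bound := fun _ => M) ?_ ?_ intervalIntegrable_const ?_
    · exact Filter.eventually_of_mem (mem_nhdsWithin_of_mem_nhds
        (Metric.closedBall_mem_nhds z₀ δpos)) (fun z hz => hmeas z (hball hz))
    · refine Filter.eventually_of_mem (mem_nhdsWithin_of_mem_nhds
        (Metric.closedBall_mem_nhds z₀ δpos)) (fun z hz => ae_of_all _ fun t ht => ?_)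
      exact hM (t, z) ⟨uIocIcc ht, hz⟩
    · refine ae_of_all _ fun t ht => ?_
      exact (ContinuousAt.comp (f := fun y : E => ((t, y) : ℝ × E))
        (hK.continuousAt (hΩ.mem_nhds (hsub t (uIocIcc ht) z₀ hz₀)))
        (continuous_const.prodMk continuous_id).continuousAt).continuousWithinAt
  | succ m IH =>
    intro F _ _ _ K Ω W hΩ hW hsub hK
    have hcast : ((m + 1 : ℕ) : WithTop ℕ∞) = (m : WithTop ℕ∞) + 1 := by push_cast; ring
    rw [hcast] at hK
    set K' : ℝ × E → (E →L[ℝ] F) :=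
      fun q => (fderiv ℝ K q).comp ((0 : E →L[ℝ] ℝ).prod (ContinuousLinearMap.id ℝ E)) with hK'def
    have hK' : ContDiffOn ℝ m K' Ω :=
      (hK.fderiv_of_isOpen hΩ le_rfl).clm_comp contDiffOn_const
    have hpart : ∀ t z, (t, z) ∈ Ω → HasFDerivAt (fun y => K (t, y)) (K' (t, z)) z := by
      intro t z hq
      have h1 : HasFDerivAt (fun y : E => ((t, y) : ℝ × E))
          ((0 : E →L[ℝ] ℝ).prod (ContinuousLinearMap.id ℝ E)) z :=
        HasFDerivAt.prodMk (hasFDerivAt_const t z) (hasFDerivAt_id z)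
      have h2 : HasFDerivAt K (fderiv ℝ K (t, z)) (t, z) :=
        ((hK.differentiableOn (by simp)).differentiableAt
          (hΩ.mem_nhds hq)).hasFDerivAt
      exact h2.comp z h1
    have hmeas : ∀ z ∈ W, AEStronglyMeasurable (fun t => K (t, z))
        (volume.restrict (Ι (0:ℝ) 1)) := by
      intro z hz
      refine ContinuousOn.aestronglyMeasurable (fun t ht => ?_) measurableSet_uIoc
      exact (ContinuousAt.comp (f := fun t : ℝ => ((t, z) : ℝ × E))
        (hK.continuousOn.continuousAt (hΩ.mem_nhds (hsub t (uIocIcc ht) z hz)))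
        (continuous_id.prodMk continuous_const).continuousAt).continuousWithinAt
    have hmeas' : ∀ z ∈ W, AEStronglyMeasurable (fun t => K' (t, z))
        (volume.restrict (Ι (0:ℝ) 1)) := by
      intro z hz
      refine ContinuousOn.aestronglyMeasurable (fun t ht => ?_) measurableSet_uIoc
      exact (ContinuousAt.comp (f := fun t : ℝ => ((t, z) : ℝ × E))
        (hK'.continuousOn.continuousAt (hΩ.mem_nhds (hsub t (uIocIcc ht) z hz)))
        (continuous_id.prodMk continuous_const).continuousAt).continuousWithinAt
    have key : ∀ z₀ ∈ W, HasFDerivAt (fun z => ∫ t in (0:ℝ)..1, K (t, z))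
        (∫ t in (0:ℝ)..1, K' (t, z₀)) z₀ := by
      intro z₀ hz₀
      obtain ⟨δ, δpos, hball⟩ : ∃ δ > 0, Metric.closedBall z₀ δ ⊆ W :=
        (Metric.nhds_basis_closedBall.mem_iff).1 (hW.mem_nhds hz₀)
      obtain ⟨M, hM⟩ := (isCompact_Icc.prod (isCompact_closedBall z₀ δ)).exists_bound_of_continuousOn
        (hK'.continuousOn.mono (fun q hq => hsub q.1 hq.1 q.2 (hball hq.2)))
      refine intervalIntegral.hasFDerivAt_integral_of_dominated_of_fderiv_le
        (F := fun x t => K (t, x)) (F' := fun x t => K' (t, x)) (bound := fun _ => M)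
        (Metric.ball_mem_nhds z₀ δpos) ?_ ?_ ?_ ?_ intervalIntegrable_const ?_
      · exact Filter.eventually_of_mem (Metric.closedBall_mem_nhds z₀ δpos)
          (fun z hz => hmeas z (hball hz))
      · refine ContinuousOn.intervalIntegrable (fun t ht => ?_)
        rw [Set.uIcc_of_le zero_le_one] at ht
        exact (ContinuousAt.comp (f := fun t : ℝ => ((t, z₀) : ℝ × E))
          (hK.continuousOn.continuousAt (hΩ.mem_nhds (hsub t ht z₀ hz₀)))
          (continuous_id.prodMk continuous_const).continuousAt).continuousWithinAt
      · exact hmeas' z₀ hz₀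
      · refine ae_of_all _ fun t ht x hx => ?_
        exact hM (t, x) ⟨uIocIcc ht, Metric.ball_subset_closedBall hx⟩
      · refine ae_of_all _ fun t ht x hx => ?_
        exact hpart t x (hsub t (uIocIcc ht) x (hball (Metric.ball_subset_closedBall hx)))
    rw [hcast, contDiffOn_succ_iff_fderiv_of_isOpen hW]
    refine ⟨fun z hz => ((key z hz).differentiableAt).differentiableWithinAt, ?_, ?_⟩
    · intro h; simp at h
    · exact (IH K' Ω W hΩ hW hsub hK').congr (fun z hz => (key z hz).fderiv)

theorem hadamard_ball {p n : ℕ} (hnp : n ≤ p) {F : Type*} [NormedAddCommGroup F]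
    [NormedSpace ℝ F] [CompleteSpace F] (c : Fin p → ℝ)
    (hc : ∀ i : Fin p, (i : ℕ) < n → c i = 0) (ε : ℝ)
    (h : (Fin p → ℝ) → F) (hh : ContDiffOn ℝ (⊤ : ℕ∞) h (Metric.ball c ε))
    (hvan : ∀ z ∈ Metric.ball c ε, (∀ j : Fin n, z (Fin.castLE hnp j) = 0) → h z = 0) :
    ∃ H : Fin n → (Fin p → ℝ) → F,
      (∀ j, ContDiffOn ℝ (⊤ : ℕ∞) (H j) (Metric.ball c ε)) ∧
      ∀ z ∈ Metric.ball c ε, h z = ∑ j, z (Fin.castLE hnp j) • H j z := by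
  set W := Metric.ball c ε with hWdef
  have hWopen : IsOpen W := Metric.isOpen_ball
  -- the scaling map
  set σ : ℝ × (Fin p → ℝ) → (Fin p → ℝ) :=
    fun q i => if (i : ℕ) < n then q.1 * q.2 i else q.2 i with hσdef
  have hσcont : ContDiff ℝ (⊤ : ℕ∞) σ := by
    apply contDiff_pi.2
    intro i
    by_cases hi : (i : ℕ) < n
    · simp only [hσdef, if_pos hi]
      exact contDiff_fst.mul ((contDiff_apply ℝ ℝ i).comp contDiff_snd)
    · simp only [hσdef, if_neg hi]
      exact (contDiff_apply ℝ ℝ i).comp contDiff_snd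
  have hσmem : ∀ t ∈ Set.Icc (0:ℝ) 1, ∀ z ∈ W, σ (t, z) ∈ W := by
    intro t ht z hz
    have : dist (σ (t, z)) c ≤ dist z c := by
      refine (dist_pi_le_iff dist_nonneg).2 fun i => ?_
      by_cases hi : (i : ℕ) < n
      · simp only [hσdef, if_pos hi, hc i hi]
        rw [Real.dist_eq, sub_zero, abs_mul]
        calc |t| * |z i| ≤ 1 * |z i| := by
              apply mul_le_mul_of_nonneg_right _ (abs_nonneg _)
              rw [abs_le]; constructor <;> [linarith [ht.1]; exact ht.2]
            _ = |z i| := one_mul _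
            _ = dist (z i) (c i) := by rw [hc i hi, Real.dist_eq, sub_zero]
            _ ≤ dist z c := dist_le_pi_dist z c i
      · simp only [hσdef, if_neg hi]
        exact dist_le_pi_dist z c i
    exact lt_of_le_of_lt this hz
  set Ω : Set (ℝ × (Fin p → ℝ)) := σ ⁻¹' W with hΩdef
  have hΩopen : IsOpen Ω := hWopen.preimage hσcont.continuous
  have hΩsub : ∀ t ∈ Set.Icc (0:ℝ) 1, ∀ z ∈ W, (t, z) ∈ Ω := fun t ht z hz => hσmem t ht z hz
  -- derivative of h
  have hDh : ContDiffOn ℝ (⊤ : ℕ∞) (fderiv ℝ h) W := by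
    apply hh.fderiv_of_isOpen hWopen
    norm_cast
  set K : Fin n → ℝ × (Fin p → ℝ) → F :=
    fun j q => fderiv ℝ h (σ q) (Pi.single (Fin.castLE hnp j) 1) with hKdef
  have hKsm : ∀ j, ContDiffOn ℝ (⊤ : ℕ∞) (K j) Ω := by
    intro j
    have h1 : ContDiffOn ℝ (⊤ : ℕ∞) (fun q => fderiv ℝ h (σ q)) Ω :=
      hDh.comp (hσcont.contDiffOn) (fun q hq => hq)
    exact (ContinuousLinearMap.apply ℝ F (Pi.single (Fin.castLE hnp j) 1)).contDiff.comp_contDiffOn h1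
  set H : Fin n → (Fin p → ℝ) → F := fun j z => ∫ t in (0:ℝ)..1, K j (t, z) with hHdef
  refine ⟨H, ?_, ?_⟩
  · intro j
    rw [show ((⊤ : ℕ∞) : WithTop ℕ∞) = (⊤ : ℕ∞) from rfl]
    rw [contDiffOn_infty]
    intro m
    exact param_int m (K j) Ω W hΩopen hWopen hΩsub
      ((hKsm j).of_le (by exact_mod_cast le_top : (m : WithTop ℕ∞) ≤ ((⊤:ℕ∞) : WithTop ℕ∞)))
  · intro z hz
    -- the curve
    have hγ : ∀ t : ℝ, HasDerivAt (fun s : ℝ => σ (s, z))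
        (fun i => if (i : ℕ) < n then z i else 0) t := by
      intro t
      apply hasDerivAt_pi.2
      intro i
      by_cases hi : (i : ℕ) < n
      · simp only [hσdef, if_pos hi]
        simpa using (hasDerivAt_id t).mul_const (z i)
      · simp only [hσdef, if_neg hi]
        exact hasDerivAt_const t (z i)
    have hmemt : ∀ t ∈ Set.uIcc (0:ℝ) 1, σ (t, z) ∈ W := by
      rw [Set.uIcc_of_le zero_le_one]
      exact fun t ht => hσmem t ht z hz
    have hdiff : ∀ t ∈ Set.uIcc (0:ℝ) 1, HasDerivAt (fun s : ℝ => h (σ (s, z)))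
        (fderiv ℝ h (σ (t, z)) (fun i => if (i : ℕ) < n then z i else 0)) t := by
      intro t ht
      have hd : HasFDerivAt h (fderiv ℝ h (σ (t, z))) (σ (t, z)) :=
        ((hh.differentiableOn (by norm_num)).differentiableAt
          (hWopen.mem_nhds (hmemt t ht))).hasFDerivAt
      exact hd.comp_hasDerivAt t (hγ t)
    have hcontD : ContinuousOn (fun t : ℝ => fderiv ℝ h (σ (t, z))
        (fun i => if (i : ℕ) < n then z i else 0)) (Set.uIcc (0:ℝ) 1) := by
      intro t ht
      have h1 : ContinuousAt (fun t : ℝ => fderiv ℝ h (σ (t, z))) t := by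
        refine ContinuousAt.comp (f := fun t : ℝ => σ (t, z)) ?_ ?_
        · exact hDh.continuousOn.continuousAt (hWopen.mem_nhds (hmemt t ht))
        · exact (hσcont.continuous.comp (continuous_id.prodMk continuous_const)).continuousAt
      exact ((ContinuousLinearMap.apply ℝ F
        (fun i : Fin p => if (i : ℕ) < n then z i else 0)).continuous.continuousAt.comp
          h1).continuousWithinAt
    have hint : IntervalIntegrable (fun t : ℝ => fderiv ℝ h (σ (t, z))
        (fun i => if (i : ℕ) < n then z i else 0)) volume 0 1 :=
      hcontD.intervalIntegrable
    have hFTC := intervalIntegral.integral_eq_sub_of_hasDerivAt hdiff hint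
    have hσ1 : σ (1, z) = z := by
      funext i; simp only [hσdef]; split <;> simp
    have hσ0 : h (σ (0, z)) = 0 := by
      apply hvan _ (hσmem 0 (by constructor <;> norm_num) z hz)
      intro j
      simp only [hσdef]
      rw [if_pos (by simpa using j.isLt)]
      ring
    rw [hσ1, hσ0, sub_zero] at hFTC
    -- expand direction vector
    have hdir : (fun i : Fin p => if (i : ℕ) < n then z i else 0)
        = ∑ j : Fin n, z (Fin.castLE hnp j) • Pi.single (M := fun _ : Fin p => ℝ) (Fin.castLE hnp j) 1 := by
      funext i
      rw [Finset.sum_apply]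
      have : ∀ j : Fin n, (z (Fin.castLE hnp j) • Pi.single (M := fun _ : Fin p => ℝ) (Fin.castLE hnp j) 1) i
          = Pi.single (M := fun _ : Fin p => ℝ) (Fin.castLE hnp j) (z (Fin.castLE hnp j)) i := by
        intro j
        by_cases hij : i = Fin.castLE hnp j
        · subst hij; simp
        · rw [Pi.smul_apply, Pi.single_eq_of_ne hij, Pi.single_eq_of_ne hij, smul_zero]
      rw [Finset.sum_congr rfl (fun j _ => this j), ← Finset.sum_apply, coord_sum hnp]
      split <;> rfl
    have hexp : ∀ t ∈ Set.uIcc (0:ℝ) 1,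
        fderiv ℝ h (σ (t, z)) (fun i => if (i : ℕ) < n then z i else 0)
          = ∑ j : Fin n, z (Fin.castLE hnp j) • K j (t, z) := by
      intro t _
      rw [hdir, map_sum]
      exact Finset.sum_congr rfl (fun j _ => (fderiv ℝ h (σ (t, z))).map_smul _ _)
    rw [intervalIntegral.integral_congr hexp] at hFTC
    have hinteg : ∀ j ∈ Finset.univ, IntervalIntegrable
        (fun t : ℝ => z (Fin.castLE hnp j) • K j (t, z)) volume 0 1 := by
      intro j _
      apply ContinuousOn.intervalIntegrable
      intro t ht
      have h1 : ContinuousAt (fun t : ℝ => K j (t, z)) t := by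
        refine ContinuousAt.comp (g := K j) (f := fun t : ℝ => ((t, z) : ℝ × (Fin p → ℝ))) ?_ ?_
        · exact (hKsm j).continuousOn.continuousAt (hΩopen.mem_nhds (hΩsub t (by
            rw [Set.uIcc_of_le zero_le_one] at ht; exact ht) z hz))
        · exact (continuous_id.prodMk continuous_const).continuousAt
      exact (h1.const_smul _).continuousWithinAt
    rw [← hFTC, intervalIntegral.integral_finset_sum hinteg]
    exact Finset.sum_congr rfl fun j _ => by rw [intervalIntegral.integral_smul]

theorem pi_surj {E : Type*} [AddCommGroup E] [Module ℝ E] {n : ℕ}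
    (L : Fin n → E →ₗ[ℝ] ℝ) (hL : LinearIndependent ℝ L) :
    Function.Surjective (LinearMap.pi L) := by
  rw [← LinearMap.range_eq_top]
  by_contra hne
  obtain ⟨φ, φne, hφ⟩ := Submodule.exists_dual_map_eq_bot_of_lt_top
    (lt_top_iff_ne_top.2 hne) inferInstance
  have hzero : ∀ v : E, φ (LinearMap.pi L v) = 0 := by
    intro v
    have hmem : φ (LinearMap.pi L v) ∈ (LinearMap.range (LinearMap.pi L)).map φ :=
      Submodule.mem_map_of_mem ⟨v, rfl⟩
    rw [hφ] at hmem
    simpa using hmem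
  have hexp : ∀ w : Fin n → ℝ, φ w = ∑ j, w j * φ (Pi.single j 1) := by
    intro w
    have hw : w = ∑ j, Pi.single j (w j) := by
      simp [Finset.univ_sum_single]
    conv_lhs => rw [hw]
    rw [map_sum]
    refine Finset.sum_congr rfl fun j _ => ?_
    have h1 : Pi.single (M := fun _ : Fin n => ℝ) j (w j)
        = w j • Pi.single (M := fun _ : Fin n => ℝ) j 1 := by
      rw [← Pi.single_smul, smul_eq_mul, mul_one]
    rw [h1, _root_.map_smul, smul_eq_mul]
  have hlin : (∑ j, φ (Pi.single j 1) • L j) = 0 := by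
    ext v
    have := hzero v
    rw [hexp (LinearMap.pi L v)] at this
    simpa [LinearMap.pi_apply, mul_comm] using this
  have hall : ∀ j, φ (Pi.single j 1) = 0 := by
    have := Fintype.linearIndependent_iff.1 hL (fun j => φ (Pi.single j 1)) hlin
    exact this
  apply φne
  ext w
  simpa using hall w

open Set



open Set

/-- Hadamard's lemma (smooth case, `𝕜`-valued functions for `𝕜 = ℝ` or `ℂ`): if
`f₁, …, f_n` are smooth real functions on an open set `U ⊆ ℝ^p` whose derivatives are
linearly independent at each common zero, then locally around each common zero `x` every
smooth `𝕜`-valued function vanishing on the common zero set is a combination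
`Σ f_j g_j` with smooth `g_j`; moreover the `f_j` can be completed to a smooth
diffeomorphism onto an open set. -/
theorem hadamard_lemma {𝕜 : Type*} [RCLike 𝕜] {p n : ℕ} (hnp : n ≤ p)
    (U : Set (Fin p → ℝ)) (hU : IsOpen U)
    (f : Fin n → (Fin p → ℝ) → ℝ)
    (hf : ∀ j, ContDiffOn ℝ (⊤ : ℕ∞) (f j) U)
    (hind : ∀ x ∈ U, (∀ j, f j x = 0) →
      LinearIndependent ℝ fun j => fderiv ℝ (f j) x)
    (x : Fin p → ℝ) (hxU : x ∈ U) (hxY : ∀ j, f j x = 0) :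
    ∃ V : Set (Fin p → ℝ), V ⊆ U ∧ IsOpen V ∧ x ∈ V ∧
      (∀ g : (Fin p → ℝ) → 𝕜, ContDiffOn ℝ (⊤ : ℕ∞) g V →
        (∀ y ∈ V, (∀ j, f j y = 0) → g y = 0) →
        ∃ G : Fin n → (Fin p → ℝ) → 𝕜,
          (∀ j, ContDiffOn ℝ (⊤ : ℕ∞) (G j) V) ∧
          ∀ y ∈ V, g y = ∑ j, algebraMap ℝ 𝕜 (f j y) * G j y) ∧
      ∃ F : Fin p → (Fin p → ℝ) → ℝ,
        (∀ j : Fin n, F (Fin.castLE hnp j) = f j) ∧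
        (∀ i, ContDiffOn ℝ (⊤ : ℕ∞) (F i) V) ∧
        IsOpen ((fun y i => F i y) '' V) ∧
        Set.InjOn (fun y i => F i y) V ∧
        ContDiffOn ℝ (⊤ : ℕ∞) (fun y i => F i y) V ∧
        ∃ Φinv : (Fin p → ℝ) → (Fin p → ℝ),
          ContDiffOn ℝ (⊤ : ℕ∞) Φinv ((fun y i => F i y) '' V) ∧
          ∀ y ∈ V, Φinv (fun i => F i y) = y := by
  classical
  have hone : (1 : WithTop ℕ∞) ≤ ((⊤ : ℕ∞) : WithTop ℕ∞) := by exact_mod_cast le_top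
  -- Linear algebra setup
  set L : Fin n → (Fin p → ℝ) →ₗ[ℝ] ℝ :=
    fun j => (ContinuousLinearMap.coeLM ℝ) (fderiv ℝ (f j) x) with hLdef
  have hLind : LinearIndependent ℝ L :=
    (hind x hxU hxY).map' (ContinuousLinearMap.coeLM ℝ)
      (LinearMap.ker_eq_bot.2 (fun a b hab => ContinuousLinearMap.coe_injective hab))
  set A : (Fin p → ℝ) →ₗ[ℝ] (Fin n → ℝ) := LinearMap.pi L with hAdef
  have hAsurj : Function.Surjective A := pi_surj L hLind
  obtain ⟨s, hs⟩ := A.exists_rightInverse_of_surjective (LinearMap.range_eq_top.2 hAsurj)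
  have hsA : ∀ w, A (s w) = w := fun w => by
    have := LinearMap.ext_iff.1 hs w
    simpa using this
  set K := LinearMap.ker A with hKdef
  have hfinK : Module.finrank ℝ K = p - n := by
    have h1 := LinearMap.finrank_range_add_finrank_ker A
    rw [LinearMap.range_eq_top.2 hAsurj] at h1
    simp only [finrank_top] at h1
    rw [Module.finrank_fin_fun, Module.finrank_fin_fun] at h1
    rw [hKdef]
    omega
  set bK : Module.Basis (Fin (p - n)) ℝ K := Module.finBasisOfFinrankEq ℝ K hfinK with hbKdef
  have hmemK : ∀ y, y - s (A y) ∈ K := by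
    intro y
    rw [hKdef, LinearMap.mem_ker, map_sub, hsA, sub_self]
  set prK : (Fin p → ℝ) →ₗ[ℝ] K :=
    (LinearMap.id - s ∘ₗ A).codRestrict K (fun y => hmemK y) with hprKdef
  set ψ : (Fin p → ℝ) →ₗ[ℝ] (Fin (p - n) → ℝ) :=
    bK.equivFun.toLinearMap ∘ₗ prK with hψdef
  -- the completed map
  set F : Fin p → (Fin p → ℝ) → ℝ := fun i y =>
    if h : (i : ℕ) < n then f ⟨i, h⟩ y
    else ψ y ⟨(i : ℕ) - n, by have := i.isLt; omega⟩ with hFdef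
  set Φ : (Fin p → ℝ) → (Fin p → ℝ) := fun y i => F i y with hΦdef
  have hFcast : ∀ j : Fin n, F (Fin.castLE hnp j) = f j := by
    intro j
    funext y
    have hlt : ((Fin.castLE hnp j : Fin p) : ℕ) < n := by simpa using j.isLt
    simp only [hFdef, dif_pos hlt]
    congr 1
  have hΦcast : ∀ y (j : Fin n), Φ y (Fin.castLE hnp j) = f j y := by
    intro y j
    show F (Fin.castLE hnp j) y = f j y
    rw [hFcast]
  -- the candidate derivative
  set sing : Fin n → ℝ →L[ℝ] (Fin p → ℝ) := fun j =>
    LinearMap.toContinuousLinearMap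
      (LinearMap.single ℝ (fun _ : Fin p => ℝ) (Fin.castLE hnp j)) with hsingdef
  have hsing_apply : ∀ (j : Fin n) (a : ℝ), sing j a = Pi.single (Fin.castLE hnp j) a :=
    fun j a => rfl
  set R' : (Fin p → ℝ) →L[ℝ] (Fin p → ℝ) := LinearMap.toContinuousLinearMap
    (LinearMap.pi (fun i : Fin p =>
      if h : (i : ℕ) < n then (0 : (Fin p → ℝ) →ₗ[ℝ] ℝ)
      else (LinearMap.proj (⟨(i : ℕ) - n, by have := i.isLt; omega⟩ : Fin (p - n))).comp ψ))
    with hR'def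
  have hR'_apply : ∀ (v : Fin p → ℝ) (i : Fin p), R' v i =
      if h : (i : ℕ) < n then 0
      else ψ v ⟨(i : ℕ) - n, by have := i.isLt; omega⟩ := by
    intro v i
    show (LinearMap.pi _) v i = _
    rw [LinearMap.pi_apply]
    split
    · rfl
    · rfl
  have hsing_sum : ∀ (a : Fin n → ℝ) (i : Fin p),
      (∑ j, sing j (a j)) i = if h : (i : ℕ) < n then a ⟨i, h⟩ else 0 := by
    intro a i
    have : (∑ j, sing j (a j)) = ∑ j, Pi.single (M := fun _ : Fin p => ℝ) (Fin.castLE hnp j) (a j) :=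
      Finset.sum_congr rfl (fun j _ => hsing_apply j (a j))
    rw [this, coord_sum hnp]
  set T : (Fin p → ℝ) → ((Fin p → ℝ) →L[ℝ] (Fin p → ℝ)) := fun y =>
    (∑ j, (sing j).comp (fderiv ℝ (f j) y)) + R' with hTdef
  have hT_apply : ∀ y v (i : Fin p), T y v i =
      (if h : (i : ℕ) < n then fderiv ℝ (f ⟨i, h⟩) y v else 0)
        + (if h : (i : ℕ) < n then 0
            else ψ v ⟨(i : ℕ) - n, by have := i.isLt; omega⟩) := by
    intro y v i
    have h1 : T y v = (∑ j, (sing j).comp (fderiv ℝ (f j) y)) v + R' v := rfl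
    have h2 : ((∑ j, (sing j).comp (fderiv ℝ (f j) y)) : (Fin p → ℝ) →L[ℝ] (Fin p → ℝ)) v
        = ∑ j, sing j (fderiv ℝ (f j) y v) := by
      rw [ContinuousLinearMap.sum_apply]
      rfl
    rw [h1]
    show ((∑ j, (sing j).comp (fderiv ℝ (f j) y)) v + R' v) i = _
    rw [Pi.add_apply, h2, hsing_sum, hR'_apply]
  have hΦdecomp : ∀ y, Φ y = (∑ j, sing j (f j y)) + R' y := by
    intro y
    funext i
    rw [Pi.add_apply, hsing_sum, hR'_apply]
    simp only [hΦdef, hFdef]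
    split <;> simp
  -- differentiability of Φ
  have hfd : ∀ (j : Fin n), ∀ y ∈ U, HasFDerivAt (f j) (fderiv ℝ (f j) y) y := by
    intro j y hy
    exact (((hf j).differentiableOn (by norm_num)).differentiableAt (hU.mem_nhds hy)).hasFDerivAt
  have hT : ∀ y ∈ U, HasFDerivAt Φ (T y) y := by
    intro y hy
    have h1 : ∀ j : Fin n, HasFDerivAt (fun z => (sing j) (f j z))
        ((sing j).comp (fderiv ℝ (f j) y)) y :=
      fun j => ((sing j).hasFDerivAt).comp y (hfd j y hy)
    have h2 : HasFDerivAt (fun z => (∑ j, (sing j) (f j z)) + R' z) (T y) y :=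
      (HasFDerivAt.fun_sum (fun j _ => h1 j)).add (R'.hasFDerivAt)
    exact h2.congr_of_eventuallyEq (Filter.Eventually.of_forall (fun z => hΦdecomp z))
  -- injectivity of T x
  have hTxker : ∀ v, T x v = 0 → v = 0 := by
    intro v hv
    have happ : ∀ i : Fin p, T x v i = 0 := fun i => by rw [hv]; rfl
    have hAv : A v = 0 := by
      funext j
      have h1 := happ (Fin.castLE hnp j)
      rw [hT_apply] at h1
      have hlt : ((Fin.castLE hnp j : Fin p) : ℕ) < n := by simpa using j.isLt
      rw [dif_pos hlt, dif_pos hlt, add_zero] at h1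
      have h2 : (⟨((Fin.castLE hnp j : Fin p) : ℕ), hlt⟩ : Fin n) = j := by
        apply Fin.ext; simp
      rw [h2] at h1
      show L j v = 0
      exact h1
    have hψv : ψ v = 0 := by
      funext k
      have hk := k.isLt
      have h1 := happ ⟨n + (k : ℕ), by omega⟩
      rw [hT_apply] at h1
      have hnlt : ¬ ((⟨n + (k : ℕ), by omega⟩ : Fin p) : ℕ) < n := by simp
      rw [dif_neg hnlt, dif_neg hnlt, zero_add] at h1
      have h2 : (⟨((⟨n + (k : ℕ), by omega⟩ : Fin p) : ℕ) - n, by omega⟩ : Fin (p - n)) = k := by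
        apply Fin.ext; simp
      rw [h2] at h1
      exact h1
    have hprKv : prK v = 0 := by
      have := bK.equivFun.injective (a₁ := prK v) (a₂ := 0) (by
        rw [map_zero]
        exact hψv)
      exact this
    have hcoe : v - s (A v) = 0 := congrArg Subtype.val hprKv
    rw [hAv, map_zero] at hcoe
    simpa using hcoe
  have hTxinj : Function.Injective (T x) := by
    intro v w hvw
    have : T x (v - w) = 0 := by rw [map_sub, hvw, sub_self]
    exact sub_eq_zero.1 (hTxker _ this)
  -- determinant nonzero at x
  have hdetx : (T x).det ≠ 0 := by
    have hbij : Function.Bijective ((T x : (Fin p → ℝ) →ₗ[ℝ] (Fin p → ℝ))) :=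
      ⟨hTxinj, (LinearMap.injective_iff_surjective
        (f := (T x : (Fin p → ℝ) →ₗ[ℝ] (Fin p → ℝ)))).1 hTxinj⟩
    set eqv := LinearEquiv.ofBijective _ hbij with heqv
    have h1 : IsUnit (LinearMap.det (eqv : (Fin p → ℝ) →ₗ[ℝ] (Fin p → ℝ))) :=
      LinearEquiv.isUnit_det' eqv
    have h2 : (eqv : (Fin p → ℝ) →ₗ[ℝ] (Fin p → ℝ))
        = (T x : (Fin p → ℝ) →ₗ[ℝ] (Fin p → ℝ)) := rfl
    rw [h2] at h1
    exact isUnit_iff_ne_zero.1 h1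
  -- continuity of T, openness of the invertibility locus
  have hTcont : ContinuousOn T U := by
    apply ContinuousOn.add _ continuousOn_const
    apply continuousOn_finset_sum
    intro j _
    have h1 : ContinuousOn (fderiv ℝ (f j)) U :=
      (hf j).continuousOn_fderiv_of_isOpen hU hone
    exact (ContinuousLinearMap.compL ℝ (Fin p → ℝ) ℝ (Fin p → ℝ)
      (sing j)).continuous.comp_continuousOn h1
  set O := U ∩ (fun y => (T y).det) ⁻¹' ({(0:ℝ)}ᶜ) with hOdef
  have hOopen : IsOpen O :=
    (ContinuousLinearMap.continuous_det.comp_continuousOn hTcont).isOpen_inter_preimage hU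
      isOpen_compl_singleton
  have hxO : x ∈ O := ⟨hxU, by simpa using hdetx⟩
  have hOU : O ⊆ U := Set.inter_subset_left
  have hOdet : ∀ y ∈ O, (T y).det ≠ 0 := fun y hy => by simpa using hy.2
  -- smoothness of Φ on U
  have hΦsmoothU : ContDiffOn ℝ ((⊤ : ℕ∞) : WithTop ℕ∞) Φ U := by
    apply contDiffOn_pi.2
    intro i
    by_cases h : (i : ℕ) < n
    · have : (fun y => Φ y i) = f ⟨i, h⟩ := by
        funext y; simp only [hΦdef, hFdef, dif_pos h]
      rw [this]
      exact hf _
    · have : (fun y => Φ y i) = fun y =>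
          ψ y ⟨(i : ℕ) - n, by have := i.isLt; omega⟩ := by
        funext y; simp only [hΦdef, hFdef, dif_neg h]
      rw [this]
      exact ((LinearMap.toContinuousLinearMap
        ((LinearMap.proj (⟨(i : ℕ) - n, by have := i.isLt; omega⟩ : Fin (p - n))).comp
          ψ)).contDiff.contDiffOn)
  -- inverse function theorem at x
  have hΦx : ContDiffAt ℝ ((⊤ : ℕ∞) : WithTop ℕ∞) Φ x :=
    hΦsmoothU.contDiffAt (hU.mem_nhds hxU)
  set Txe := (T x).toContinuousLinearEquivOfDetNeZero hdetx with hTxe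
  have hdfx : HasFDerivAt Φ (Txe : (Fin p → ℝ) →L[ℝ] (Fin p → ℝ)) x := by
    rw [hTxe, ContinuousLinearMap.coe_toContinuousLinearEquivOfDetNeZero]
    exact hT x hxU
  set e := hΦx.toOpenPartialHomeomorph Φ hdfx (by simp) with hedef
  have hecoe : (e : (Fin p → ℝ) → (Fin p → ℝ)) = Φ := rfl
  have hxsource : x ∈ e.source := hΦx.mem_toOpenPartialHomeomorph_source hdfx (by simp)
  have hΦxtarget : Φ x ∈ e.target := hΦx.image_mem_toOpenPartialHomeomorph_target hdfx (by simp)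
  -- choose ε
  have hOs_open : IsOpen (e.target ∩ e.symm ⁻¹' (O ∩ e.source)) :=
    e.isOpen_inter_preimage_symm (hOopen.inter e.open_source)
  have hΦx_mem : Φ x ∈ e.target ∩ e.symm ⁻¹' (O ∩ e.source) := by
    refine ⟨hΦxtarget, ?_⟩
    have : e.symm (Φ x) = x := by
      have := e.left_inv hxsource
      rwa [hecoe] at this
    rw [Set.mem_preimage, this]
    exact ⟨hxO, hxsource⟩
  obtain ⟨ε, εpos, hball⟩ := Metric.isOpen_iff.1 hOs_open _ hΦx_mem
  set W := Metric.ball (Φ x) ε with hWdef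
  set V := e.source ∩ Φ ⁻¹' W with hVdef
  have hVopen : IsOpen V := by
    have := e.isOpen_inter_preimage (s := W) Metric.isOpen_ball
    rwa [hecoe] at this
  have hxV : x ∈ V := ⟨hxsource, Metric.mem_ball_self εpos⟩
  have hVsub : V ⊆ O ∩ e.source := by
    intro y hy
    have h1 : Φ y ∈ e.target ∩ e.symm ⁻¹' (O ∩ e.source) := hball hy.2
    have h2 : e.symm (Φ y) = y := by
      have := e.left_inv hy.1
      rwa [hecoe] at this
    have h3 := h1.2
    rw [Set.mem_preimage, h2] at h3
    exact h3
  have hVU : V ⊆ U := fun y hy => hOU (hVsub hy).1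
  have hsymmV : ∀ z ∈ W, e.symm z ∈ V ∧ Φ (e.symm z) = z := by
    intro z hz
    have h1 : z ∈ e.target ∩ e.symm ⁻¹' (O ∩ e.source) := hball hz
    have h2 : e.symm z ∈ O ∩ e.source := h1.2
    have h3 : Φ (e.symm z) = z := by
      have := e.right_inv h1.1
      rwa [hecoe] at this
    exact ⟨⟨h2.2, by rw [Set.mem_preimage, h3]; exact hz⟩, h3⟩
  have himg : Φ '' V = W := by
    apply Set.Subset.antisymm
    · rintro _ ⟨y, hy, rfl⟩
      exact hy.2
    · intro z hz
      obtain ⟨h1, h2⟩ := hsymmV z hz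
      exact ⟨e.symm z, h1, h2⟩
  -- smoothness of the inverse on W
  have hsymm_smooth : ContDiffOn ℝ ((⊤ : ℕ∞) : WithTop ℕ∞) e.symm W := by
    intro z hz
    obtain ⟨hzV, hzΦ⟩ := hsymmV z hz
    have hzO : e.symm z ∈ O := (hVsub hzV).1
    have hdety : (T (e.symm z)).det ≠ 0 := hOdet _ hzO
    have hztarget : z ∈ e.target := (hball hz).1
    have hder : HasFDerivAt (↑e : (Fin p → ℝ) → (Fin p → ℝ))
        (((T (e.symm z)).toContinuousLinearEquivOfDetNeZero hdety :
          (Fin p → ℝ) →L[ℝ] (Fin p → ℝ))) (e.symm z) := by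
      rw [hecoe, ContinuousLinearMap.coe_toContinuousLinearEquivOfDetNeZero]
      exact hT _ (hOU hzO)
    have hsm : ContDiffAt ℝ ((⊤ : ℕ∞) : WithTop ℕ∞) (↑e : (Fin p → ℝ) → (Fin p → ℝ))
        (e.symm z) := by
      rw [hecoe]
      exact hΦsmoothU.contDiffAt (hU.mem_nhds (hVU hzV))
    exact (e.contDiffAt_symm hztarget hder hsm).contDiffWithinAt
  -- assemble
  refine ⟨V, hVU, hVopen, hxV, ?_, F, hFcast, ?_, ?_, ?_, ?_, e.symm, ?_, ?_⟩
  · -- part 1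
    intro g hg hvg
    have hc : ∀ i : Fin p, (i : ℕ) < n → Φ x i = 0 := by
      intro i hi
      show F i x = 0
      simp only [hFdef, dif_pos hi]
      exact hxY _
    have hcomp : ContDiffOn ℝ (⊤ : ℕ∞) (fun z => g (e.symm z)) W :=
      hg.comp hsymm_smooth (fun z hz => (hsymmV z hz).1)
    have hvanh : ∀ z ∈ W, (∀ j : Fin n, z (Fin.castLE hnp j) = 0) → g (e.symm z) = 0 := by
      intro z hz hzero
      obtain ⟨hzV, hzΦ⟩ := hsymmV z hz
      apply hvg _ hzV
      intro j
      have h1 : f j (e.symm z) = Φ (e.symm z) (Fin.castLE hnp j) := (hΦcast _ j).symm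
      rw [h1, hzΦ]
      exact hzero j
    obtain ⟨H, hHs, hHeq⟩ := hadamard_ball hnp (Φ x) hc ε (fun z => g (e.symm z)) hcomp hvanh
    refine ⟨fun j y => H j (Φ y), ?_, ?_⟩
    · intro j
      exact (hHs j).comp (hΦsmoothU.mono hVU) (fun y hy => hy.2)
    · intro y hy
      have h2 : e.symm (Φ y) = y := by
        have := e.left_inv hy.1
        rwa [hecoe] at this
      have h3 := hHeq (Φ y) hy.2
      rw [h2] at h3
      rw [h3]
      refine Finset.sum_congr rfl fun j _ => ?_
      rw [hΦcast y j, Algebra.smul_def]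
  · -- smoothness of components
    intro i
    by_cases h : (i : ℕ) < n
    · have h1 : F i = f ⟨i, h⟩ := funext fun y => by simp only [hFdef, dif_pos h]
      rw [h1]
      exact (hf _).mono hVU
    · have h1 : F i = fun y => ψ y ⟨(i : ℕ) - n, by have := i.isLt; omega⟩ :=
        funext fun y => by simp only [hFdef, dif_neg h]
      rw [h1]
      exact ((LinearMap.toContinuousLinearMap
        ((LinearMap.proj (⟨(i : ℕ) - n, by have := i.isLt; omega⟩ : Fin (p - n))).comp
          ψ)).contDiff.contDiffOn)
  · -- open image
    show IsOpen (Φ '' V)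
    rw [himg]
    exact Metric.isOpen_ball
  · -- injectivity
    show Set.InjOn Φ V
    have := e.injOn
    rw [hecoe] at this
    exact this.mono (fun y hy => hy.1)
  · -- smoothness of Φ
    exact hΦsmoothU.mono hVU
  · -- smoothness of inverse
    show ContDiffOn ℝ ((⊤ : ℕ∞) : WithTop ℕ∞) e.symm (Φ '' V)
    rw [himg]
    exact hsymm_smooth
  · -- left inverse
    intro y hy
    show e.symm (Φ y) = y
    have := e.left_inv hy.1
    rwa [hecoe] at this
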